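/- Let φ ∈ L^∞(𝕋) and fix even p and i, j with 0 ≤ i < j < p and j − i = p/2. Let C_p^{i,j} be the transposition conjugation on H²(𝔻) swapping the coefficients of z^{i+pk} and z^{j+pk} (up to complex conjugation) and conjugating all other coefficients. Then T_φ is C_p^{i,j}-symmetric (i.e., C_p^{i,j} T_φ C_p^{i,j} = T_φ*) if and only if φ̂(pl) = φ̂(−pl) for all l ∈ ℤ, and φ̂(r+pl) = 0 for all l ∈ ℤ and 1 ≤ r ≤ p−1. -/

import Mathlib

open scoped ComplexConjugate

/-- The Hardy space `H²(𝔻)`, identified with `ℓ²(ℕ, ℂ)` via `z^n ↦ e n`. -/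
noncomputable abbrev HardySpace := lp (fun _ : ℕ => ℂ) 2

/-- The standard basis vector `e j`, corresponding to `z^j`. -/
noncomputable def e (j : ℕ) : HardySpace := lp.single 2 j 1

private lemma coord_inner (f : HardySpace) (m : ℕ) : f m = inner (𝕜 := ℂ) (e m) f := by
  rw [e, lp.inner_single_left, RCLike.inner_apply]; simp

private lemma e_apply (n m : ℕ) : (e n) m = if m = n then (1:ℂ) else 0 := by
  rw [e, lp.single_apply]; split <;> simp_all

private lemma T_hasSum (T : HardySpace →L[ℂ] HardySpace) (φhat : ℤ → ℂ)
    (hT : ∀ j' m : ℕ, (T (e j')) m = φhat ((m : ℤ) - (j' : ℤ))) (y : HardySpace) (μ : ℕ) :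
    HasSum (fun k : ℕ => y k * φhat ((μ:ℤ) - k)) ((T y) μ) := by
  have h1 : HasSum (fun k : ℕ => lp.single 2 k (y k)) y :=
    lp.hasSum_single (by norm_num) y
  have h2 := (innerSL ℂ (e μ)).hasSum (T.hasSum h1)
  have h4 : (innerSL ℂ (e μ)) (T y) = (T y) μ := by
    rw [innerSL_apply_apply, ← coord_inner]
  rw [h4] at h2
  refine h2.congr_fun fun k => ?_
  have hs : lp.single 2 k (y k) = y k • e k := by
    rw [e, ← lp.single_smul]; norm_num
  rw [hs, map_smul, map_smul, smul_eq_mul, innerSL_apply_apply, ← coord_inner, hT]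

private lemma adj_hasSum (T : HardySpace →L[ℂ] HardySpace) (φhat : ℤ → ℂ)
    (hT : ∀ j' m : ℕ, (T (e j')) m = φhat ((m : ℤ) - (j' : ℤ))) (x : HardySpace) (n : ℕ) :
    HasSum (fun k : ℕ => conj (φhat ((k:ℤ) - (n:ℤ))) * x k)
      ((ContinuousLinearMap.adjoint T x) n) := by
  have h1 : (ContinuousLinearMap.adjoint T x) n = inner (𝕜 := ℂ) (T (e n)) x := by
    rw [coord_inner, ContinuousLinearMap.adjoint_inner_right]
  rw [h1]
  refine (lp.hasSum_inner (𝕜 := ℂ) (T (e n)) x).congr_fun fun k => ?_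
  rw [RCLike.inner_apply, hT, mul_comm]

/-- Characterization of `C_p^{i,j}`-symmetric Toeplitz operators when `p` is even and
`j - i = p/2`: `C_p^{i,j} T_φ C_p^{i,j} = T_φ*` iff `φhat (pl) = φhat (-pl)` for all `l ∈ ℤ`
and `φhat (r + pl) = 0` for all `l ∈ ℤ` and `1 ≤ r ≤ p-1`. Here `φhat` is the (square-summable)
sequence of Fourier coefficients of `φ ∈ L^∞(𝕋)`, `T_φ` acts on the basis by
`(T_φ e_j)_m = φhat (m-j)`, and `C_p^{i,j}` swaps-and-conjugates the coefficients at indices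
`i + pk` and `j + pk` and conjugates all others. -/
theorem toeplitz_Cpij_symmetric_iff_even (p i j : ℕ) (hpe : Even p)
    (hij : i < j) (hjp : j < p) (hdiff : j - i = p / 2)
    (φhat : ℤ → ℂ) (hsq : Summable fun k => ‖φhat k‖ ^ 2)
    (T : HardySpace →L[ℂ] HardySpace)
    (hT : ∀ j' m : ℕ, (T (e j')) m = φhat ((m : ℤ) - (j' : ℤ)))
    (C : HardySpace → HardySpace)
    (hC1 : ∀ (a : HardySpace) (k : ℕ), (C a) (i + p * k) = conj (a (j + p * k)))
    (hC2 : ∀ (a : HardySpace) (k : ℕ), (C a) (j + p * k) = conj (a (i + p * k)))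
    (hC3 : ∀ (a : HardySpace) (k m : ℕ), m < p → m ≠ i → m ≠ j →
      (C a) (m + p * k) = conj (a (m + p * k))) :
    (∀ x, C (T (C x)) = ContinuousLinearMap.adjoint T x) ↔
      ((∀ l : ℤ, φhat ((p : ℤ) * l) = φhat (-((p : ℤ) * l))) ∧
        ∀ (l : ℤ) (r : ℕ), 1 ≤ r → r ≤ p - 1 → φhat ((r : ℤ) + p * l) = 0) := by
  have hp0 : 0 < p := lt_of_le_of_lt (Nat.zero_le j) hjp
  have hip : i < p := lt_trans hij hjp
  have hq2 : p = (j - i) + (j - i) := by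
    rcases hpe with ⟨t, ht⟩
    omega
  -- the swap map σ
  set σ : ℕ → ℕ := fun n => if n % p = i then n + (j - i)
    else if n % p = j then n - (j - i) else n with hσdef
  have hmod : ∀ m₀ a : ℕ, m₀ < p → (m₀ + p * a) % p = m₀ := fun m₀ a h => by
    rw [Nat.add_mul_mod_self_left, Nat.mod_eq_of_lt h]
  have hσi : ∀ a, σ (i + p * a) = j + p * a := by
    intro a
    simp only [hσdef]
    rw [hmod i a hip]
    simp
    omega
  have hσj : ∀ a, σ (j + p * a) = i + p * a := by
    intro a
    simp only [hσdef]
    rw [hmod j a hjp]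
    simp [Nat.ne_of_gt hij]
    omega
  have hσo : ∀ m₀ a, m₀ < p → m₀ ≠ i → m₀ ≠ j → σ (m₀ + p * a) = m₀ + p * a := by
    intro m₀ a h h1 h2
    simp only [hσdef]
    rw [hmod m₀ a h]
    simp [h1, h2]
  -- σ is an involution
  have hσσ : ∀ n, σ (σ n) = n := by
    intro n
    have hk : n = n % p + p * (n / p) := (Nat.mod_add_div n p).symm
    set k := n / p with hkdef
    have hlt : n % p < p := Nat.mod_lt n hp0
    by_cases hni : n % p = i
    · have hn' : n = i + p * k := by omega
      rw [hn', hσi, hσj]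
    · by_cases hnj : n % p = j
      · have hn' : n = j + p * k := by omega
        rw [hn', hσj, hσi]
      · rw [hk, hσo _ k hlt hni hnj, hσo _ k hlt hni hnj]
  -- C is coordinatewise conjugation composed with σ
  have hCco : ∀ (a : HardySpace) (n : ℕ), (C a) n = conj (a (σ n)) := by
    intro a n
    have hk : n = n % p + p * (n / p) := (Nat.mod_add_div n p).symm
    set k := n / p with hkdef
    have hlt : n % p < p := Nat.mod_lt n hp0
    by_cases hni : n % p = i
    · have hn' : n = i + p * k := by omega
      rw [hn', hC1, hσi]
    · by_cases hnj : n % p = j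
      · have hn' : n = j + p * k := by omega
        rw [hn', hC2, hσj]
      · rw [hk, hC3 a k (n % p) hlt hni hnj, hσo _ k hlt hni hnj]
  -- C of a basis vector
  have hCe : ∀ n, C (e n) = e (σ n) := by
    intro n
    apply lp.ext
    funext m
    rw [hCco, e_apply, e_apply]
    by_cases h : m = σ n
    · simp [h, hσσ]
    · have h2 : σ m ≠ n := fun hc => h (by rw [← hc, hσσ])
      simp [h, h2]
  -- Step 1: the operator identity is equivalent to the combinatorial condition H
  have step1 : (∀ x, C (T (C x)) = ContinuousLinearMap.adjoint T x) ↔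
      (∀ m n : ℕ, φhat ((σ m : ℤ) - (σ n : ℤ)) = φhat ((n : ℤ) - (m : ℤ))) := by
    constructor
    · intro hop m n
      have h1 := congrFun (congrArg (fun f : HardySpace => (f : ∀ _ : ℕ, ℂ)) (hop (e n))) m
      simp only at h1
      rw [hCe, hCco, hT] at h1
      have h2 : (ContinuousLinearMap.adjoint T (e n)) m = conj (φhat ((n:ℤ) - (m:ℤ))) := by
        rw [coord_inner, ContinuousLinearMap.adjoint_inner_right, ← inner_conj_symm,
          ← coord_inner, hT]
      rw [h2] at h1
      exact star_injective h1
    · intro hH x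
      apply lp.ext
      funext n
      have hlhs : (C (T (C x))) n = conj ((T (C x)) (σ n)) := hCco _ n
      have h1 : HasSum (fun k : ℕ => (C x) k * φhat ((σ n : ℤ) - (k:ℤ))) ((T (C x)) (σ n)) :=
        T_hasSum T φhat hT (C x) (σ n)
      have h2 := h1.star
      have h3 := (Equiv.hasSum_iff (f := fun k : ℕ => star ((C x) k * φhat ((σ n : ℤ) - (k:ℤ))))
        (⟨σ, σ, hσσ, hσσ⟩ : Equiv.Perm ℕ)).mpr h2
      have h4 : HasSum (fun k : ℕ => conj (φhat ((k:ℤ) - (n:ℤ))) * x k)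
          (star ((T (C x)) (σ n))) := by
        refine h3.congr_fun fun k => ?_
        simp only [Function.comp_apply, Equiv.coe_fn_mk, star_mul']
        rw [hCco, hσσ, hH n k]
        simp only [starRingEnd_apply, star_star]
        ring
      have h5 := adj_hasSum T φhat hT x n
      rw [hlhs, starRingEnd_apply]
      exact h4.unique h5
  rw [step1]
  constructor
  · intro hH
    have hab : ∀ c : ℤ, ∃ a b : ℕ, (a:ℤ) - b = c := by
      intro c; rcases le_or_gt 0 c with hc | hc
      exacts [⟨c.toNat, 0, by omega⟩, ⟨0, (-c).toNat, by omega⟩]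
    have key : ∀ (m₀ n₀ s t : ℕ), (∀ a, σ (m₀ + p * a) = s + p * a) →
        (∀ a, σ (n₀ + p * a) = t + p * a) → ∀ c : ℤ,
        φhat ((s:ℤ) - t + p * c) = φhat ((n₀:ℤ) - m₀ - p * c) := by
      intro m₀ n₀ s t hs ht c
      obtain ⟨a, b, habc⟩ := hab c
      have h := hH (m₀ + p * a) (n₀ + p * b)
      rw [hs a, ht b] at h
      have e1 : ((s + p * a : ℕ) : ℤ) - ((t + p * b : ℕ) : ℤ) = (s:ℤ) - t + p * c := by
        push_cast; rw [← habc]; ring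
      have e2 : ((n₀ + p * b : ℕ) : ℤ) - ((m₀ + p * a : ℕ) : ℤ) = (n₀:ℤ) - m₀ - p * c := by
        push_cast; rw [← habc]; ring
      rw [e1, e2] at h
      exact h
    have hσoN : ∀ N : ℕ, N < p → N ≠ i → N ≠ j → (∀ a, σ (N + p * a) = N + p * a) :=
      fun N h h1 h2 a => hσo N a h h1 h2
    refine ⟨?_, ?_⟩
    · intro l
      have h := key i i j j hσi hσi l
      simpa using h
    · -- vanishing of off-diagonal coefficients
      set q : ℤ := (j:ℤ) - (i:ℤ) with hqdef
      have hqp : q + q = (p:ℤ) := by omega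
      have hB : ∀ x : ℤ, ¬((p:ℤ) ∣ x) → ¬((p:ℤ) ∣ (x - q)) → φhat x = φhat (q - x) := by
        intro x hx hxq
        have hd0 : ((j:ℤ) - x) % p + p * (((j:ℤ) - x) / p) = (j:ℤ) - x := Int.emod_add_mul_ediv _ p
        set n₀ : ℤ := ((j:ℤ) - x) % p with hn₀
        set d : ℤ := ((j:ℤ) - x) / p with hd
        have h0 : 0 ≤ n₀ := Int.emod_nonneg _ (by omega)
        have h1 : n₀ < p := Int.emod_lt_of_pos _ (by omega)
        set N := n₀.toNat with hNdef
        have hN : (N:ℤ) = n₀ := Int.toNat_of_nonneg h0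
        have hNp : N < p := by omega
        have hNi : N ≠ i := by
          intro h
          apply hxq
          refine ⟨-d, ?_⟩
          have e : (p:ℤ) * (-d) = -(p * d) := by ring
          omega
        have hNj : N ≠ j := by
          intro h
          apply hx
          refine ⟨-d, ?_⟩
          have e : (p:ℤ) * (-d) = -(p * d) := by ring
          omega
        have h := key i N j N hσi (hσoN N hNp hNi hNj) (-d)
        have e1 : (j:ℤ) - N + p * (-d) = x := by
          have e : (p:ℤ) * (-d) = -(p * d) := by ring
          omega
        have e2 : (N:ℤ) - i - p * (-d) = q - x := by
          have e : (p:ℤ) * (-d) = -(p * d) := by ring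
          omega
        rw [e1, e2] at h
        exact h
      have hB' : ∀ x : ℤ, ¬((p:ℤ) ∣ x) → ¬((p:ℤ) ∣ (x - q)) → φhat x = φhat (-q - x) := by
        intro x hx hxq
        have hd0 : ((j:ℤ) + x) % p + p * (((j:ℤ) + x) / p) = (j:ℤ) + x := Int.emod_add_mul_ediv _ p
        set n₀ : ℤ := ((j:ℤ) + x) % p with hn₀
        set d : ℤ := ((j:ℤ) + x) / p with hd
        have h0 : 0 ≤ n₀ := Int.emod_nonneg _ (by omega)
        have h1 : n₀ < p := Int.emod_lt_of_pos _ (by omega)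
        set N := n₀.toNat with hNdef
        have hN : (N:ℤ) = n₀ := Int.toNat_of_nonneg h0
        have hNp : N < p := by omega
        have hNj : N ≠ j := by
          intro h
          exact hx ⟨d, by omega⟩
        have hNi : N ≠ i := by
          intro h
          refine hxq ⟨d - 1, ?_⟩
          have e : (p:ℤ) * (d - 1) = p * d - p := by ring
          omega
        have h := key N i N j (hσoN N hNp hNi hNj) hσi d
        have e1 : (N:ℤ) - j + p * d = x := by omega
        have e2 : (i:ℤ) - N - p * d = -q - x := by omega
        rw [e1, e2] at h
        exact h
      have hzero : ∀ (x P : ℤ), 0 < P → (∀ y : ℤ, P ∣ (y - x) → φhat (y + P) = φhat y) →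
          φhat x = 0 := by
        intro x P hP hstep
        have hper : ∀ l : ℤ, φhat (x + P * l) = φhat x := by
          intro l
          induction l using Int.induction_on with
          | zero => simp
          | succ k ih =>
            have h := hstep (x + P * k) ⟨k, by ring⟩
            rw [show x + P * ((k:ℤ) + 1) = x + P * k + P by ring, h, ih]
          | pred k ih =>
            have h := hstep (x + P * (-(k:ℤ) - 1)) ⟨-(k:ℤ) - 1, by ring⟩
            rw [show x + P * (-(k:ℤ) - 1) + P = x + P * (-(k:ℤ)) by ring] at h
            rw [← ih]
            exact h.symm
        have hinj : Function.Injective fun l : ℤ => x + P * l := by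
          intro a b hab2
          dsimp only at hab2
          exact mul_left_cancel₀ (by omega : P ≠ 0) (by omega : P * a = P * b)
        have hs2 : Summable ((fun k => ‖φhat k‖ ^ 2) ∘ fun l : ℤ => x + P * l) :=
          hsq.comp_injective hinj
        simp only [Function.comp_def, hper] at hs2
        have h3 := (summable_const_iff _).mp hs2
        have h4 : ‖φhat x‖ = 0 := by
          nlinarith [h3, norm_nonneg (φhat x)]
        simpa using h4
      have hstep1 : ∀ y : ℤ, ¬((p:ℤ) ∣ y) → ¬((p:ℤ) ∣ (y - q)) → φhat y = φhat (y - p) := by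
        intro y hy hyq
        have hx1 : ¬((p:ℤ) ∣ (q - y)) := by
          rintro ⟨t, htt⟩
          refine hyq ⟨-t, ?_⟩
          have e : (p:ℤ) * (-t) = -(p * t) := by ring
          omega
        have hx2 : ¬((p:ℤ) ∣ ((q - y) - q)) := by
          rintro ⟨t, htt⟩
          refine hy ⟨-t, ?_⟩
          have e : (p:ℤ) * (-t) = -(p * t) := by ring
          omega
        have b1 := hB (q - y) hx1 hx2
        have b2 := hB' (q - y) hx1 hx2
        rw [show q - (q - y) = y by ring] at b1
        rw [show -q - (q - y) = y - p from by omega] at b2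
        rw [← b1]
        exact b2
      have hR1 : ∀ c : ℤ, φhat (q + p * c) = φhat (q - p * c) := by
        intro c
        have h := key i j j i hσi hσj c
        rw [← hqdef] at h
        exact h
      have hR2 : ∀ c : ℤ, φhat (-q + p * c) = φhat (-q - p * c) := by
        intro c
        have h := key j i i j hσj hσi c
        rw [show (i:ℤ) - j = -q from by omega] at h
        exact h
      have hstep2 : ∀ y : ℤ, (p:ℤ) ∣ (y - q) → φhat (y + 2 * p) = φhat y := by
        rintro y ⟨t, htt⟩
        have ea : (p:ℤ) * (t + 2) = p * t + 2 * p := by ring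
        have eb : (p:ℤ) * (-t - 1) = -(p * t) - p := by ring
        have e1 : y + 2 * p = q + p * (t + 2) := by omega
        have e2 : q - p * (t + 2) = -q + p * (-t - 1) := by omega
        have e3 : -q - p * (-t - 1) = q + p * t := by omega
        have e4 : y = q + p * t := by omega
        rw [e1, hR1 (t + 2), e2, hR2 (-t - 1), e3, ← e4]
      have hvan : ∀ x : ℤ, ¬((p:ℤ) ∣ x) → φhat x = 0 := by
        intro x hx
        by_cases hxq : (p:ℤ) ∣ (x - q)
        · refine hzero x (2 * p) (by omega) ?_
          rintro y ⟨t, htt⟩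
          apply hstep2
          obtain ⟨u, hss⟩ := hxq
          refine ⟨2 * t + u, ?_⟩
          have e : (p:ℤ) * (2 * t + u) = 2 * (p * t) + p * u := by ring
          have e2 : (2 * (p:ℤ)) * t = 2 * (p * t) := by ring
          omega
        · refine hzero x p (by omega) ?_
          rintro y ⟨t, htt⟩
          have hy : ¬((p:ℤ) ∣ (y + p)) := by
            rintro ⟨u, hu⟩
            refine hx ⟨u - t - 1, ?_⟩
            have e : (p:ℤ) * (u - t - 1) = p * u - p * t - p := by ring
            omega
          have hyq : ¬((p:ℤ) ∣ (y + p - q)) := by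
            rintro ⟨u, hu⟩
            refine hxq ⟨u - t - 1, ?_⟩
            have e : (p:ℤ) * (u - t - 1) = p * u - p * t - p := by ring
            omega
          have h := hstep1 (y + p) hy hyq
          rw [show y + p - p = y by ring] at h
          exact h
      intro l r hr1 hr2
      apply hvan
      rintro ⟨t, htt⟩
      have h2 : (p:ℤ) ∣ (r:ℤ) := by
        refine ⟨t - l, ?_⟩
        have e : (p:ℤ) * (t - l) = p * t - p * l := by ring
        omega
      have h3 := Int.le_of_dvd (by exact_mod_cast hr1) h2
      omega
  · rintro ⟨c1, c2⟩ m n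
    have hvan : ∀ x : ℤ, ¬((p:ℤ) ∣ x) → φhat x = 0 := by
      intro x hx
      have hpz : (0:ℤ) < p := by exact_mod_cast hp0
      have h0 : 0 ≤ x % p := Int.emod_nonneg x (by omega)
      have h1 : x % p < p := Int.emod_lt_of_pos x hpz
      have h2 : x % p ≠ 0 := fun h => hx (Int.dvd_of_emod_eq_zero h)
      have hr : ((x % p).toNat : ℤ) = x % p := Int.toNat_of_nonneg h0
      have h := c2 (x / p) (x % p).toNat (by omega) (by omega)
      rw [show ((x % p).toNat : ℤ) + p * (x / p) = x from by rw [hr]; exact Int.emod_add_mul_ediv x p] at h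
      exact h
    have hσm : ∀ mm : ℕ, ∃ s : ℕ, s < p ∧ σ mm = s + p * (mm / p) ∧
        ((mm % p ≠ i ∧ mm % p ≠ j ∧ s = mm % p) ∨ (mm % p = i ∧ s = j) ∨ (mm % p = j ∧ s = i)) := by
      intro mm
      have hk : mm = mm % p + p * (mm / p) := (Nat.mod_add_div mm p).symm
      by_cases hmi : mm % p = i
      · refine ⟨j, hjp, ?_, Or.inr (Or.inl ⟨hmi, rfl⟩)⟩
        conv_lhs => rw [show mm = i + p * (mm / p) from by omega]
        exact hσi _
      · by_cases hmj : mm % p = j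
        · refine ⟨i, hip, ?_, Or.inr (Or.inr ⟨hmj, rfl⟩)⟩
          conv_lhs => rw [show mm = j + p * (mm / p) from by omega]
          exact hσj _
        · refine ⟨mm % p, Nat.mod_lt mm hp0, ?_, Or.inl ⟨hmi, hmj, rfl⟩⟩
          conv_lhs => rw [hk]
          exact hσo _ _ (Nat.mod_lt mm hp0) hmi hmj
    obtain ⟨s, hs1, hs2, hs3⟩ := hσm m
    obtain ⟨t, ht1, ht2, ht3⟩ := hσm n
    have hm' : (m:ℤ) = ((m % p : ℕ) : ℤ) + p * ((m / p : ℕ) : ℤ) := by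
      exact_mod_cast (Nat.mod_add_div m p).symm
    have hn' : (n:ℤ) = ((n % p : ℕ) : ℤ) + p * ((n / p : ℕ) : ℤ) := by
      exact_mod_cast (Nat.mod_add_div n p).symm
    have hσm' : ((σ m : ℕ) : ℤ) = (s:ℤ) + p * ((m / p : ℕ) : ℤ) := by exact_mod_cast hs2
    have hσn' : ((σ n : ℕ) : ℤ) = (t:ℤ) + p * ((n / p : ℕ) : ℤ) := by exact_mod_cast ht2
    by_cases hmn : m % p = n % p
    · have hst : s = t := by
        rcases hs3 with ⟨a1, a2, a3⟩ | ⟨a1, a2⟩ | ⟨a1, a2⟩ <;>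
          rcases ht3 with ⟨b1, b2, b3⟩ | ⟨b1, b2⟩ | ⟨b1, b2⟩ <;> omega
      have hc := c1 (((m / p : ℕ) : ℤ) - ((n / p : ℕ) : ℤ))
      have e1 : ((σ m : ℕ) : ℤ) - ((σ n : ℕ) : ℤ) =
          (p:ℤ) * (((m / p : ℕ) : ℤ) - ((n / p : ℕ) : ℤ)) := by
        rw [hσm', hσn', hst]; ring
      have e2 : (n:ℤ) - (m:ℤ) = -((p:ℤ) * (((m / p : ℕ) : ℤ) - ((n / p : ℕ) : ℤ))) := by
        rw [hm', hn', show ((m % p : ℕ) : ℤ) = ((n % p : ℕ) : ℤ) from by exact_mod_cast hmn]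
        ring
      rw [e1, e2]
      exact hc
    · have hst : s ≠ t := by
        rcases hs3 with ⟨a1, a2, a3⟩ | ⟨a1, a2⟩ | ⟨a1, a2⟩ <;>
          rcases ht3 with ⟨b1, b2, b3⟩ | ⟨b1, b2⟩ | ⟨b1, b2⟩ <;> omega
      have h1 : ¬((p:ℤ) ∣ ((n:ℤ) - m)) := by
        rintro ⟨u, hu⟩
        have e : (p:ℤ) * (u - ((n / p : ℕ) : ℤ) + ((m / p : ℕ) : ℤ)) =
            p * u - p * ((n / p : ℕ) : ℤ) + p * ((m / p : ℕ) : ℤ) := by ring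
        have hδ : ((n % p : ℕ) : ℤ) - ((m % p : ℕ) : ℤ) =
            (p:ℤ) * (u - ((n / p : ℕ) : ℤ) + ((m / p : ℕ) : ℤ)) := by omega
        have habs : |((n % p : ℕ) : ℤ) - ((m % p : ℕ) : ℤ)| < (p:ℤ) := by
          have hmm := Nat.mod_lt m hp0
          have hnn := Nat.mod_lt n hp0
          rw [abs_lt]
          constructor <;> omega
        have hz := Int.eq_zero_of_abs_lt_dvd ⟨_, hδ⟩ habs
        omega
      have h2 : ¬((p:ℤ) ∣ (((σ m : ℕ) : ℤ) - ((σ n : ℕ) : ℤ))) := by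
        rintro ⟨u, hu⟩
        have e : (p:ℤ) * (u - ((m / p : ℕ) : ℤ) + ((n / p : ℕ) : ℤ)) =
            p * u - p * ((m / p : ℕ) : ℤ) + p * ((n / p : ℕ) : ℤ) := by ring
        have hδ : (s:ℤ) - (t:ℤ) =
            (p:ℤ) * (u - ((m / p : ℕ) : ℤ) + ((n / p : ℕ) : ℤ)) := by omega
        have habs : |(s:ℤ) - (t:ℤ)| < (p:ℤ) := by
          rw [abs_lt]
          constructor <;> omega
        have hz := Int.eq_zero_of_abs_lt_dvd ⟨_, hδ⟩ habs
        omega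
      rw [hvan _ h2, hvan _ h1]
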